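/- Let S ⊂ ℝ be finite, let P_{2n}(z) = Σ_{j=0}^{2n} a_{j,n} z^j with coefficients in S be self-reciprocal (a_{j,n} = a_{2n−j,n}), let k ≥ 1, and suppose sup_n NC(P_{2n}(z)(z^k − 1)) < ∞. Define T_n(t) := P_{2n}(e^{it}) e^{−int} and R_n(x) := ∫_0^x T_n(t) dt. Then for every δ with 0 < δ ≤ 1/(2k), sup_n max_{x∈[−δ,δ]} |R_n(x)| < ∞. -/

import Mathlib

open Real MeasureTheory Polynomial

namespace AUB


-- pointwise bound
lemma ptbound {k N t : ℝ} (hk : 0 < k) (hN : 0 ≤ N) (ht : 0 < t) (htk : k * t ≤ 1/2) :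
    |Real.sin (N*t) / Real.sin (k*t)| ≤ N * π / (2*k) := by
  have hkt : 0 < k * t := mul_pos hk ht
  have hktpi : k * t ≤ π / 2 := htk.trans (by linarith [Real.pi_gt_three])
  have hs : 2 / π * (k * t) ≤ Real.sin (k * t) := Real.mul_le_sin hkt.le hktpi
  have hspos : 0 < Real.sin (k * t) := lt_of_lt_of_le (by positivity) hs
  rw [abs_div, abs_of_pos hspos, div_le_iff₀ hspos]
  calc |Real.sin (N*t)| ≤ |N*t| := Real.abs_sin_le_abs
    _ = N * t := abs_of_nonneg (by positivity)
    _ = (N * π / (2*k)) * (2/π * (k*t)) := by field_simp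
    _ ≤ (N * π / (2*k)) * Real.sin (k*t) := by
        apply mul_le_mul_of_nonneg_left hs (by positivity)

lemma intble {k N a b : ℝ} (hk : 0 < k) (hN : 0 ≤ N) (h0 : 0 ≤ a) (hab : a ≤ b)
    (hb : k * b ≤ 1/2) :
    IntervalIntegrable (fun t => Real.sin (N*t) / Real.sin (k*t)) volume a b := by
  rw [intervalIntegrable_iff_integrableOn_Ioc_of_le hab]
  apply MeasureTheory.Integrable.mono' (g := fun _ => N * π / (2*k))
      (integrableOn_const measure_Ioc_lt_top.ne)
  · exact ((measurable_const.mul measurable_id).sin.div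
      ((measurable_const.mul measurable_id).sin)).aestronglyMeasurable
  · filter_upwards [MeasureTheory.ae_restrict_mem measurableSet_Ioc] with t ht
    have ht0 : 0 < t := lt_of_le_of_lt h0 ht.1
    have : k * t ≤ 1/2 := le_trans (mul_le_mul_of_nonneg_left ht.2 hk.le) hb
    simpa [abs_div] using ptbound hk hN ht0 this

lemma smallbound {k N a b : ℝ} (hk : 0 < k) (hN : 0 ≤ N) (h0 : 0 ≤ a) (hab : a ≤ b)
    (hb : k * b ≤ 1/2) :
    |∫ t in a..b, Real.sin (N*t) / Real.sin (k*t)| ≤ N * π / (2*k) * (b - a) := by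
  have : (b - a) = |b - a| := (abs_of_nonneg (sub_nonneg.2 hab)).symm
  rw [this, ← Real.norm_eq_abs]
  apply intervalIntegral.norm_integral_le_of_norm_le_const
  intro t ht
  rw [Set.uIoc_of_le hab] at ht
  have ht0 : 0 < t := lt_of_le_of_lt h0 ht.1
  have : k * t ≤ 1/2 := le_trans (mul_le_mul_of_nonneg_left ht.2 hk.le) hb
  rw [Real.norm_eq_abs]
  exact ptbound hk hN ht0 this

lemma sinpos {k t : ℝ} (hk : 0 < k) (ht : 0 < t) (htk : k * t ≤ 1/2) :
    0 < Real.sin (k*t) := by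
  apply Real.sin_pos_of_pos_of_lt_pi (mul_pos hk ht)
  linarith [Real.pi_gt_three]


lemma ibp {k N a b : ℝ} (hk : 0 < k) (hN : 0 < N) (ha : 0 < a) (hab : a ≤ b)
    (hb : k * b ≤ 1/2) :
    |∫ t in a..b, Real.sin (N*t) / Real.sin (k*t)| ≤ 3 / (N * Real.sin (k*a)) := by
  have hpi := Real.pi_gt_three
  have hIcc : Set.uIcc a b = Set.Icc a b := Set.uIcc_of_le hab
  have hsin : ∀ t ∈ Set.Icc a b, 0 < Real.sin (k*t) := fun t ht =>
    sinpos hk (lt_of_lt_of_le ha ht.1) (le_trans (mul_le_mul_of_nonneg_left ht.2 hk.le) hb)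
  have hcos : ∀ t ∈ Set.Icc a b, 0 ≤ Real.cos (k*t) := by
    intro t ht
    apply Real.cos_nonneg_of_mem_Icc
    constructor
    · have : 0 ≤ k * t := le_trans (by positivity) (mul_le_mul_of_nonneg_left ht.1 hk.le)
      linarith
    · have : k * t ≤ 1/2 := le_trans (mul_le_mul_of_nonneg_left ht.2 hk.le) hb
      linarith
  have hcsin : ∀ c : ℝ, Continuous (fun t : ℝ => Real.sin (c*t)) :=
    fun c => Real.continuous_sin.comp (continuous_const.mul continuous_id)
  have hccos : ∀ c : ℝ, Continuous (fun t : ℝ => Real.cos (c*t)) :=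
    fun c => Real.continuous_cos.comp (continuous_const.mul continuous_id)
  set s : ℝ → ℝ := fun t => Real.sin (N*t) with hs_def
  set u : ℝ → ℝ := fun t => -Real.cos (N*t) / N with hu_def
  set v : ℝ → ℝ := fun t => (Real.sin (k*t))⁻¹ with hv_def
  set v' : ℝ → ℝ := fun t => -(Real.cos (k*t) * k) / (Real.sin (k*t))^2 with hv'_def
  set g : ℝ → ℝ := fun t => Real.cos (k*t) * k / (Real.sin (k*t))^2 with hg_def
  have hudv : ∀ t : ℝ, HasDerivAt u (s t) t := by
    intro t
    have h1 : HasDerivAt (fun t : ℝ => N * t) N t := by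
      simpa using (hasDerivAt_id t).const_mul N
    have h2 := (h1.cos).neg.div_const N
    rw [show s t = -(-Real.sin (N*t) * N) / N by
      show Real.sin (N*t) = _
      rw [neg_mul, neg_neg, mul_div_assoc, div_self hN.ne', mul_one]]
    exact h2
  have hvdv : ∀ t ∈ Set.Icc a b, HasDerivAt v (v' t) t := by
    intro t ht
    have h1 : HasDerivAt (fun t : ℝ => k * t) k t := by
      simpa using (hasDerivAt_id t).const_mul k
    exact (h1.sin).inv (hsin t ht).ne'
  have hvcont : ContinuousOn v (Set.Icc a b) := by
    exact ContinuousOn.inv₀ (hcsin k).continuousOn (fun t ht => (hsin t ht).ne')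
  have hgcont : ContinuousOn g (Set.Icc a b) := by
    apply ContinuousOn.div ((hccos k).mul continuous_const).continuousOn
      (((hcsin k).pow 2).continuousOn)
    exact fun t ht => pow_ne_zero 2 (hsin t ht).ne'
  have hv'cont : ContinuousOn v' (Set.Icc a b) := by
    have : v' = fun t => -g t := by funext t; rw [hv'_def, hg_def]; ring
    rw [this]; exact hgcont.neg
  have hv'int : IntervalIntegrable v' volume a b := by
    apply ContinuousOn.intervalIntegrable; rwa [hIcc]
  have hgint : IntervalIntegrable g volume a b := by
    apply ContinuousOn.intervalIntegrable; rwa [hIcc]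
  have key : ∫ t in a..b, s t * v t
      = u b * v b - u a * v a - ∫ t in a..b, u t * v' t := by
    have hk1 := intervalIntegral.integral_mul_deriv_eq_deriv_mul_of_hasDerivAt
      (a := a) (b := b) (u := u) (v := v) (u' := s) (v' := v')
      (by rw [hIcc]; exact (((hccos N).neg).div_const N).continuousOn)
      (by rwa [hIcc])
      (fun t _ => hudv t)
      (fun t ht => hvdv t (Set.mem_Icc_of_Ioo
        (by rwa [min_eq_left hab, max_eq_right hab] at ht)))
      ((hcsin N).intervalIntegrable a b) hv'int
    linarith [hk1]
  have heq : (∫ t in a..b, Real.sin (N*t) / Real.sin (k*t))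
      = ∫ t in a..b, s t * v t := by
    simp only [hs_def, hv_def, div_eq_mul_inv]
  -- FTC for g
  have hFTC : (∫ t in a..b, g t) = (Real.sin (k*a))⁻¹ - (Real.sin (k*b))⁻¹ := by
    have hd : ∀ t ∈ Set.uIcc a b, HasDerivAt (fun t => -v t) (g t) t := by
      intro t ht
      rw [hIcc] at ht
      have := (hvdv t ht).neg
      rw [show g t = -v' t by rw [hv'_def, hg_def]; ring]
      exact this
    rw [intervalIntegral.integral_eq_sub_of_hasDerivAt hd (by
      apply ContinuousOn.intervalIntegrable; rwa [hIcc])]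
    simp only [hv_def]
    ring
  have hbpos := hsin b ⟨hab, le_refl b⟩
  have hapos := hsin a ⟨le_refl a, hab⟩
  have hmono : Real.sin (k*a) ≤ Real.sin (k*b) := by
    apply Real.sin_le_sin_of_le_of_le_pi_div_two
    · nlinarith [mul_pos hk ha]
    · nlinarith
    · exact mul_le_mul_of_nonneg_left hab hk.le
  have hinv : (Real.sin (k*b))⁻¹ ≤ (Real.sin (k*a))⁻¹ := by
    apply inv_anti₀ hapos hmono
  -- bound boundary terms
  have hbd : ∀ t ∈ Set.Icc a b, |u t * v t| ≤ 1 / (N * Real.sin (k*a)) := by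
    intro t ht
    rw [abs_mul, hu_def, hv_def]
    simp only
    rw [abs_div, abs_of_pos hN, abs_inv, abs_of_pos (hsin t ht)]
    have h1 : |-Real.cos (N*t)| ≤ 1 := by rw [abs_neg]; exact Real.abs_cos_le_one _
    have h2 : (Real.sin (k*t))⁻¹ ≤ (Real.sin (k*a))⁻¹ := by
      apply inv_anti₀ hapos
      apply Real.sin_le_sin_of_le_of_le_pi_div_two
      · nlinarith [mul_pos hk ha]
      · have : k * t ≤ 1/2 := le_trans (mul_le_mul_of_nonneg_left ht.2 hk.le) hb
        nlinarith
      · exact mul_le_mul_of_nonneg_left ht.1 hk.le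
    calc |-Real.cos (N*t)| / N * (Real.sin (k*t))⁻¹
        ≤ 1 / N * (Real.sin (k*a))⁻¹ := by
          apply mul_le_mul _ h2 (inv_nonneg.2 (hsin t ht).le) (by positivity)
          rw [div_le_div_iff₀ hN hN]
          nlinarith [h1, hN]
      _ = 1 / (N * Real.sin (k*a)) := by rw [one_div, one_div, mul_inv]
  -- bound the remainder integral
  have hrem : |∫ t in a..b, u t * v' t| ≤ 1 / (N * Real.sin (k*a)) := by
    have huv'int : IntervalIntegrable (fun t => u t * v' t) volume a b := by
      apply ContinuousOn.intervalIntegrable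
      rw [hIcc]
      exact ((((hccos N).neg).div_const N).continuousOn).mul hv'cont
    calc |∫ t in a..b, u t * v' t| ≤ ∫ t in a..b, |u t * v' t| :=
          intervalIntegral.abs_integral_le_integral_abs hab
      _ ≤ ∫ t in a..b, (1/N) * g t := by
          apply intervalIntegral.integral_mono_on hab huv'int.abs
            (hgint.const_mul _)
          intro t ht
          have hgnn : 0 ≤ g t := by
            rw [hg_def]
            apply div_nonneg (mul_nonneg (hcos t ht) hk.le) (by positivity)
          have : u t * v' t = Real.cos (N*t) / N * g t := by
            rw [hu_def, hv'_def, hg_def]; field_simp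
          rw [this, abs_mul]
          apply mul_le_mul _ (le_of_eq (abs_of_nonneg hgnn)) (abs_nonneg _) (by positivity)
          rw [abs_div, abs_of_pos hN, div_le_div_iff₀ hN hN]
          nlinarith [Real.abs_cos_le_one (N*t), hN]
      _ = (1/N) * ((Real.sin (k*a))⁻¹ - (Real.sin (k*b))⁻¹) := by
          rw [intervalIntegral.integral_const_mul, hFTC]
      _ ≤ (1/N) * (Real.sin (k*a))⁻¹ := by
          apply mul_le_mul_of_nonneg_left _ (by positivity)
          have : 0 < (Real.sin (k*b))⁻¹ := by positivity
          linarith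
      _ = 1 / (N * Real.sin (k*a)) := by rw [one_div, one_div, mul_inv]
  rw [heq, key]
  have h1 := hbd b ⟨hab, le_refl b⟩
  have h2 := hbd a ⟨le_refl a, hab⟩
  calc |u b * v b - u a * v a - ∫ t in a..b, u t * v' t|
      ≤ |u b * v b| + |u a * v a| + |∫ t in a..b, u t * v' t| := by
        apply le_trans (abs_sub _ _)
        gcongr
        apply abs_sub
    _ ≤ 1 / (N * Real.sin (k*a)) + 1 / (N * Real.sin (k*a)) + 1 / (N * Real.sin (k*a)) := by
        gcongr
    _ = 3 / (N * Real.sin (k*a)) := by ring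

lemma intbound {k N x : ℝ} (hk : 0 < k) (hN : 0 ≤ N) (hx : 0 ≤ x) (hxk : k * x ≤ 1/2) :
    |∫ t in (0:ℝ)..x, Real.sin (N*t) / Real.sin (k*t)| ≤ 2 * π / k := by
  have hpi := Real.pi_gt_three
  rcases le_or_gt (N * x) 1 with hsmall | hbig
  · calc |∫ t in (0:ℝ)..x, Real.sin (N*t) / Real.sin (k*t)|
        ≤ N * π / (2*k) * (x - 0) := smallbound hk hN le_rfl hx hxk
      _ = (N * x) * (π / (2*k)) := by ring
      _ ≤ 1 * (π / (2*k)) := by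
          apply mul_le_mul_of_nonneg_right hsmall (by positivity)
      _ ≤ 2 * π / k := by rw [one_mul]; rw [div_le_div_iff₀ (by positivity) hk]; nlinarith
  · have hNpos : 0 < N := by nlinarith
    have hxpos : 0 < x := by nlinarith
    set a : ℝ := 1 / N with ha_def
    have hapos : 0 < a := by positivity
    have hax : a ≤ x := by rw [ha_def, div_le_iff₀ hNpos]; linarith
    have hka : k * a ≤ 1/2 := le_trans (mul_le_mul_of_nonneg_left hax hk.le) hxk
    have hsa : 2 / π * (k * a) ≤ Real.sin (k * a) :=
      Real.mul_le_sin (by positivity) (by nlinarith)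
    have hint1 : IntervalIntegrable (fun t => Real.sin (N*t)/Real.sin (k*t)) volume 0 a :=
      intble hk hN le_rfl hapos.le hka
    have hint2 : IntervalIntegrable (fun t => Real.sin (N*t)/Real.sin (k*t)) volume a x :=
      intble hk hN hapos.le hax hxk
    have hsplit := intervalIntegral.integral_add_adjacent_intervals hint1 hint2
    have h1 : |∫ t in (0:ℝ)..a, Real.sin (N*t) / Real.sin (k*t)| ≤ π / (2*k) := by
      calc |∫ t in (0:ℝ)..a, Real.sin (N*t) / Real.sin (k*t)|
          ≤ N * π / (2*k) * (a - 0) := smallbound hk hN le_rfl hapos.le hka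
        _ = π / (2*k) := by rw [ha_def]; field_simp; ring
    have h2 : |∫ t in a..x, Real.sin (N*t) / Real.sin (k*t)| ≤ 3 * π / (2*k) := by
      calc |∫ t in a..x, Real.sin (N*t) / Real.sin (k*t)|
          ≤ 3 / (N * Real.sin (k*a)) := ibp hk hNpos hapos hax hxk
        _ ≤ 3 / (N * (2 / π * (k * a))) := by
            apply div_le_div_of_nonneg_left (by norm_num) (by positivity)
            apply mul_le_mul_of_nonneg_left hsa hNpos.le
        _ = 3 * π / (2*k) := by rw [ha_def]; field_simp
    calc |∫ t in (0:ℝ)..x, Real.sin (N*t) / Real.sin (k*t)|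
        = |(∫ t in (0:ℝ)..a, Real.sin (N*t) / Real.sin (k*t))
            + ∫ t in a..x, Real.sin (N*t) / Real.sin (k*t)| := by rw [hsplit]
      _ ≤ |∫ t in (0:ℝ)..a, Real.sin (N*t) / Real.sin (k*t)|
            + |∫ t in a..x, Real.sin (N*t) / Real.sin (k*t)| := abs_add_le _ _
      _ ≤ π / (2*k) + 3 * π / (2*k) := add_le_add h1 h2
      _ = 2 * π / k := by field_simp; ring



-- reflection lemma
lemma reflect_sum (n : ℕ) (c : ℕ → ℝ) (hsr : ∀ j ≤ 2*n, c j = c (2*n - j)) (e : ℝ) (t : ℝ)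
    : (∑ j ∈ Finset.range (2*n+1), c j * Real.sin (((j:ℝ) - n + e) * t))
      = -∑ j ∈ Finset.range (2*n+1), c j * Real.sin (((j:ℝ) - n - e) * t) := by
  have h := (Finset.sum_range_reflect
    (fun j => c j * Real.sin (((j:ℝ) - n + e) * t)) (2*n+1))
  rw [← h, ← Finset.sum_neg_distrib]
  apply Finset.sum_congr rfl
  intro j hj
  rw [Finset.mem_range] at hj
  have hj' : j ≤ 2*n := by omega
  have h1 : 2*n+1-1-j = 2*n-j := by omega
  rw [h1, ← hsr j hj']
  have h2 : ((2*n - j : ℕ) : ℝ) - n + e = -(((j:ℝ) - n - e)) := by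
    rw [Nat.cast_sub hj']
    push_cast
    ring
  rw [h2, neg_mul, Real.sin_neg]
  ring

lemma trig_identity (k n : ℕ) (P : Polynomial ℝ) (hdeg : P.natDegree ≤ 2*n)
    (hsr : ∀ j ≤ 2*n, P.coeff j = P.coeff (2*n - j)) (t : ℝ) :
    (∑ j ∈ Finset.range (2*n+1), P.coeff j * Real.cos (((j:ℝ) - n) * t)) * Real.sin (k*t)
    = ∑ m ∈ Finset.range (2*n+k+1),
        (P * (X^k - 1)).coeff m * Real.sin (((m:ℝ) - n) * t) := by
  have hprod : ∀ A B : ℝ, Real.cos A * Real.sin B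
      = (Real.sin (A+B) - Real.sin (A-B))/2 := by
    intro A B
    rw [Real.sin_sub_sin]
    have e1 : (A + B - (A - B))/2 = B := by ring
    have e2 : (A + B + (A - B))/2 = A := by ring
    rw [e1, e2]
    ring
  have hG : (∑ j ∈ Finset.range (2*n+1), P.coeff j * Real.sin (((j:ℝ) - n) * t)) = 0 := by
    have h := reflect_sum n P.coeff hsr 0 t
    simp only [add_zero, sub_zero] at h
    linarith [h]
  have hS : (∑ j ∈ Finset.range (2*n+1), P.coeff j * Real.sin (((j:ℝ) - n - k) * t))
      = -∑ j ∈ Finset.range (2*n+1), P.coeff j * Real.sin (((j:ℝ) - n + k) * t) := by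
    have h := reflect_sum n P.coeff hsr k t
    linarith [h]
  -- LHS = S2
  have hLHS : (∑ j ∈ Finset.range (2*n+1), P.coeff j * Real.cos (((j:ℝ) - n) * t))
      * Real.sin (k*t)
      = ∑ j ∈ Finset.range (2*n+1), P.coeff j * Real.sin (((j:ℝ) - n + k) * t) := by
    rw [Finset.sum_mul]
    have hterm : ∀ j ∈ Finset.range (2*n+1),
        P.coeff j * Real.cos (((j:ℝ) - n) * t) * Real.sin (k*t)
        = P.coeff j * ((Real.sin (((j:ℝ) - n + k) * t)
            - Real.sin (((j:ℝ) - n - k) * t))/2) := by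
      intro j _
      rw [mul_assoc, hprod]
      have e1 : ((j:ℝ) - n) * t + k * t = ((j:ℝ) - n + k) * t := by ring
      have e2 : ((j:ℝ) - n) * t - k * t = ((j:ℝ) - n - k) * t := by ring
      rw [e1, e2]
    rw [Finset.sum_congr rfl hterm]
    have : ∀ j ∈ Finset.range (2*n+1),
        P.coeff j * ((Real.sin (((j:ℝ) - n + k) * t) - Real.sin (((j:ℝ) - n - k) * t))/2)
        = (P.coeff j * Real.sin (((j:ℝ) - n + k) * t)
          - P.coeff j * Real.sin (((j:ℝ) - n - k) * t))/2 := by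
      intro j _; ring
    rw [Finset.sum_congr rfl this, ← Finset.sum_div, Finset.sum_sub_distrib, hS]
    ring
  -- RHS
  have hcoeffQ : ∀ m, (P * (X^k - 1)).coeff m
      = (if k ≤ m then P.coeff (m - k) else 0) - P.coeff m := by
    intro m
    rw [mul_sub, mul_one, Polynomial.coeff_sub, Polynomial.coeff_mul_X_pow']
  have hRHS : ∑ m ∈ Finset.range (2*n+k+1),
      (P * (X^k - 1)).coeff m * Real.sin (((m:ℝ) - n) * t)
      = (∑ m ∈ Finset.range (2*n+k+1),
          (if k ≤ m then P.coeff (m - k) else 0) * Real.sin (((m:ℝ) - n) * t))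
        - ∑ m ∈ Finset.range (2*n+k+1), P.coeff m * Real.sin (((m:ℝ) - n) * t) := by
    rw [← Finset.sum_sub_distrib]
    apply Finset.sum_congr rfl
    intro m _
    rw [hcoeffQ m]
    ring
  -- second sum equals hG sum
  have h2nd : ∑ m ∈ Finset.range (2*n+k+1), P.coeff m * Real.sin (((m:ℝ) - n) * t)
      = ∑ m ∈ Finset.range (2*n+1), P.coeff m * Real.sin (((m:ℝ) - n) * t) := by
    symm
    apply Finset.sum_subset
    · apply Finset.range_subset_range.2; omega
    · intro m _ hm
      rw [Finset.mem_range, not_lt] at hm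
      have : P.natDegree < m := by omega
      rw [Polynomial.coeff_eq_zero_of_natDegree_lt this, zero_mul]
  -- first sum equals S2
  have h1st : ∑ m ∈ Finset.range (2*n+k+1),
      (if k ≤ m then P.coeff (m - k) else 0) * Real.sin (((m:ℝ) - n) * t)
      = ∑ j ∈ Finset.range (2*n+1), P.coeff j * Real.sin (((j:ℝ) - n + k) * t) := by
    have hsplit : 2*n+k+1 = k + (2*n+1) := by omega
    rw [hsplit, Finset.sum_range_add]
    have hz : ∑ m ∈ Finset.range k,
        (if k ≤ m then P.coeff (m - k) else 0) * Real.sin (((m:ℝ) - n) * t) = 0 := by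
      apply Finset.sum_eq_zero
      intro m hm
      rw [Finset.mem_range] at hm
      rw [if_neg (by omega), zero_mul]
    rw [hz, zero_add]
    apply Finset.sum_congr rfl
    intro j _
    rw [if_pos (by omega)]
    have h1 : k + j - k = j := by omega
    have h2 : ((k + j : ℕ) : ℝ) - n = (j:ℝ) - n + k := by push_cast; ring
    rw [h1, h2]
  rw [hLHS, hRHS, h1st, h2nd, hG]
  ring


lemma intble' {k : ℝ} (N : ℝ) {a b : ℝ} (hk : 0 < k) (h0 : 0 ≤ a) (hab : a ≤ b)
    (hb : k * b ≤ 1/2) :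
    IntervalIntegrable (fun t => Real.sin (N*t) / Real.sin (k*t)) volume a b := by
  rcases le_or_gt 0 N with hN | hN
  · exact intble hk hN h0 hab hb
  · have h := (intble hk (by linarith : (0:ℝ) ≤ -N) h0 hab hb).neg
    have heq : (fun t => Real.sin (N*t) / Real.sin (k*t))
        = -(fun t => Real.sin (-N*t) / Real.sin (k*t)) := by
      funext t
      simp only [Pi.neg_apply, neg_mul, Real.sin_neg, neg_div, neg_neg]
    rw [heq]
    exact h

lemma intbound' {k : ℝ} (N : ℝ) {x : ℝ} (hk : 0 < k) (hx : 0 ≤ x) (hxk : k * x ≤ 1/2) :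
    |∫ t in (0:ℝ)..x, Real.sin (N*t) / Real.sin (k*t)| ≤ 2 * π / k := by
  rcases le_or_gt 0 N with hN | hN
  · exact intbound hk hN hx hxk
  · have h := intbound hk (by linarith : (0:ℝ) ≤ -N) hx hxk
    have heq : (∫ t in (0:ℝ)..x, Real.sin (-N*t) / Real.sin (k*t))
        = -∫ t in (0:ℝ)..x, Real.sin (N*t) / Real.sin (k*t) := by
      rw [← intervalIntegral.integral_neg]
      apply intervalIntegral.integral_congr
      intro t _
      simp only [neg_mul, Real.sin_neg, neg_div]
    rw [heq, abs_neg] at h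
    exact h

lemma intble2 {k : ℝ} (c N : ℝ) {a b : ℝ} (hk : 0 < k) (h0 : 0 ≤ a) (hab : a ≤ b)
    (hb : k * b ≤ 1/2) :
    IntervalIntegrable (fun t => c * (Real.sin (N*t) / Real.sin (k*t))) volume a b :=
  (intble' N hk h0 hab hb).const_mul c

end AUB

open AUB

/-- If the self-reciprocal polynomials `P_{2n}` have coefficients in a finite set `S ⊂ ℝ` and
`sup_n NC(P_{2n}(z)(z^k - 1)) < ∞`, then the antiderivatives `R_n` of
`T_n(t) = P_{2n}(e^{it})e^{-int}` are uniformly bounded on `[-δ, δ]` for `0 < δ ≤ 1/(2k)`. -/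
theorem antiderivative_uniformly_bounded (S : Set ℝ) (hS : S.Finite) (k : ℕ) (hk : 1 ≤ k)
    (P : ℕ → Polynomial ℝ)
    (hdeg : ∀ n, (P n).natDegree ≤ 2 * n)
    (hcoeff : ∀ n, ∀ j ≤ 2 * n, (P n).coeff j ∈ S)
    (hsr : ∀ n, ∀ j ≤ 2 * n, (P n).coeff j = (P n).coeff (2 * n - j))
    (C : ℕ) (hC : ∀ n, (P n * (Polynomial.X ^ k - 1)).support.card ≤ C)
    (δ : ℝ) (hδ1 : 0 < δ) (hδ2 : δ ≤ 1 / (2 * k)) :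
    ∃ B : ℝ, ∀ n : ℕ, ∀ x ∈ Set.Icc (-δ) δ,
      |∫ t in (0 : ℝ)..x,
        ∑ j ∈ Finset.range (2 * n + 1), (P n).coeff j * Real.cos (((j : ℝ) - n) * t)| ≤ B := by
  obtain ⟨M0, hM0⟩ := (hS.image abs).bddAbove
  set M : ℝ := max M0 0 with hM_def
  have hMnn : 0 ≤ M := le_max_right _ _
  have hM : ∀ n j, |(P n).coeff j| ≤ M := by
    intro n j
    rcases le_or_gt j (2*n) with h | h
    · exact le_trans (hM0 ⟨_, hcoeff n j h, rfl⟩) (le_max_left _ _)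
    · rw [Polynomial.coeff_eq_zero_of_natDegree_lt (lt_of_le_of_lt (hdeg n) h), abs_zero]
      exact hMnn
  have hkR : (0:ℝ) < (k:ℝ) := by exact_mod_cast Nat.lt_of_lt_of_le Nat.zero_lt_one hk
  have hQb : ∀ n m, |(P n * (X^k - 1)).coeff m| ≤ 2*M := by
    intro n m
    have : (P n * (X^k - 1)).coeff m
        = (if k ≤ m then (P n).coeff (m - k) else 0) - (P n).coeff m := by
      rw [mul_sub, mul_one, Polynomial.coeff_sub, Polynomial.coeff_mul_X_pow']
    rw [this]
    apply le_trans (abs_sub _ _)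
    have h1 : |if k ≤ m then (P n).coeff (m - k) else 0| ≤ M := by
      split
      · exact hM n _
      · rw [abs_zero]; exact hMnn
    linarith [hM n m]
  refine ⟨(C:ℝ) * (2*M * (2 * π / (k:ℝ))), ?_⟩
  have key : ∀ n : ℕ, ∀ x : ℝ, 0 ≤ x → x ≤ δ →
      |∫ t in (0 : ℝ)..x,
        ∑ j ∈ Finset.range (2 * n + 1), (P n).coeff j * Real.cos (((j : ℝ) - n) * t)|
        ≤ (C:ℝ) * (2*M * (2 * π / (k:ℝ))) := by
    intro n x hx0 hxδ
    have hkx : (k:ℝ) * x ≤ 1/2 := by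
      have h1 : x ≤ 1 / (2*(k:ℝ)) := le_trans hxδ hδ2
      calc (k:ℝ) * x ≤ (k:ℝ) * (1/(2*(k:ℝ))) := by
            apply mul_le_mul_of_nonneg_left h1 hkR.le
        _ = 1/2 := by field_simp
    obtain ⟨b, hb⟩ : ∃ b : ℕ → ℝ, b = fun m => (P n * (X^k - 1)).coeff m := ⟨_, rfl⟩
    have hbz : ∀ m, m ∉ (P n * (X^k - 1)).support → b m = 0 := by
      intro m hm
      rw [hb]
      exact Polynomial.notMem_support_iff.1 hm
    have hbb : ∀ m, |b m| ≤ 2*M := by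
      intro m; rw [hb]; exact hQb n m
    have hcongr : (∫ t in (0 : ℝ)..x,
          ∑ j ∈ Finset.range (2 * n + 1), (P n).coeff j * Real.cos (((j : ℝ) - n) * t))
        = ∫ t in (0 : ℝ)..x, ∑ m ∈ Finset.range (2*n+k+1),
            b m * (Real.sin (((m:ℝ) - n) * t) / Real.sin ((k:ℝ)*t)) := by
      apply intervalIntegral.integral_congr_ae
      apply Filter.Eventually.of_forall
      intro t ht
      rw [Set.uIoc_of_le hx0] at ht
      have htpos : 0 < t := ht.1
      have htk : (k:ℝ) * t ≤ 1/2 :=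
        le_trans (mul_le_mul_of_nonneg_left ht.2 hkR.le) hkx
      have hsint : 0 < Real.sin ((k:ℝ)*t) := sinpos hkR htpos htk
      have hid := trig_identity k n (P n) (hdeg n) (hsr n) t
      have hsum : ∑ m ∈ Finset.range (2*n+k+1),
          b m * (Real.sin (((m:ℝ) - n) * t) / Real.sin ((k:ℝ)*t))
          = (∑ m ∈ Finset.range (2*n+k+1),
              (P n * (X^k - 1)).coeff m * Real.sin (((m:ℝ) - n) * t)) / Real.sin ((k:ℝ)*t) := by
        rw [Finset.sum_div]
        apply Finset.sum_congr rfl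
        intro m _
        rw [hb, mul_div_assoc]
      rw [hsum, ← hid, mul_div_cancel_right₀ _ hsint.ne']
    rw [hcongr]
    have hint : ∀ m ∈ Finset.range (2*n+k+1),
        IntervalIntegrable (fun t => b m
          * (Real.sin (((m:ℝ) - n) * t) / Real.sin ((k:ℝ)*t))) volume 0 x := by
      intro m _
      exact intble2 _ ((m:ℝ) - n) hkR le_rfl hx0 hkx
    rw [intervalIntegral.integral_finset_sum hint]
    have hconst : ∀ m ∈ Finset.range (2*n+k+1),
        (∫ t in (0:ℝ)..x, b m
          * (Real.sin (((m:ℝ) - n) * t) / Real.sin ((k:ℝ)*t)))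
        = b m
          * ∫ t in (0:ℝ)..x, Real.sin (((m:ℝ) - n) * t) / Real.sin ((k:ℝ)*t) := by
      intro m _
      exact intervalIntegral.integral_const_mul _ _
    rw [Finset.sum_congr rfl hconst]
    have hsupp : (P n * (X^k - 1)).support ⊆ Finset.range (2*n+k+1) := by
      intro m hm
      rw [Finset.mem_range]
      have h1 := Polynomial.le_natDegree_of_mem_supp m hm
      have h2 : (P n * (X^k - 1)).natDegree ≤ 2*n + k := by
        apply le_trans (Polynomial.natDegree_mul_le)
        have h3 : (X^k - 1 : ℝ[X]).natDegree ≤ k := by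
          apply le_trans (Polynomial.natDegree_sub_le _ _)
          simp [Polynomial.natDegree_X_pow]
        have h4 := hdeg n
        omega
      omega
    rw [← Finset.sum_subset hsupp (fun m _ hm => by
      rw [hbz m hm, zero_mul])]
    calc |∑ m ∈ (P n * (X^k - 1)).support, b m
            * ∫ t in (0:ℝ)..x, Real.sin (((m:ℝ) - n) * t) / Real.sin ((k:ℝ)*t)|
        ≤ ∑ m ∈ (P n * (X^k - 1)).support, |b m
            * ∫ t in (0:ℝ)..x, Real.sin (((m:ℝ) - n) * t) / Real.sin ((k:ℝ)*t)| :=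
          Finset.abs_sum_le_sum_abs _ _
      _ ≤ ∑ _m ∈ (P n * (X^k - 1)).support, 2*M * (2 * π / (k:ℝ)) := by
          apply Finset.sum_le_sum
          intro m _
          rw [abs_mul]
          apply mul_le_mul (hbb m) (intbound' _ hkR hx0 hkx) (abs_nonneg _)
            (by linarith)
      _ = ((P n * (X^k - 1)).support.card : ℝ) * (2*M * (2 * π / (k:ℝ))) := by
          rw [Finset.sum_const, nsmul_eq_mul]
      _ ≤ (C:ℝ) * (2*M * (2 * π / (k:ℝ))) := by
          apply mul_le_mul_of_nonneg_right _ (by positivity)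
          exact_mod_cast hC n
  intro n x hx
  rcases le_or_gt 0 x with hx0 | hx0
  · exact key n x hx0 hx.2
  · set f : ℝ → ℝ := fun t =>
      ∑ j ∈ Finset.range (2 * n + 1), (P n).coeff j * Real.cos (((j : ℝ) - n) * t) with hf_def
    have hfeven : ∀ t, f (-t) = f t := by
      intro t
      rw [hf_def]
      apply Finset.sum_congr rfl
      intro j _
      rw [mul_neg, Real.cos_neg]
    have hflip : (∫ t in (0:ℝ)..x, f t) = -∫ t in (0:ℝ)..(-x), f t := by
      have h1 : (∫ t in x..(0:ℝ), f (-t)) = ∫ t in (0:ℝ)..(-x), f t := by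
        simpa using intervalIntegral.integral_comp_neg (a := x) (b := 0) (f := f)
      have h2 : (∫ t in x..(0:ℝ), f (-t)) = ∫ t in x..(0:ℝ), f t := by
        apply intervalIntegral.integral_congr
        intro t _
        exact hfeven t
      rw [h2] at h1
      rw [← h1, intervalIntegral.integral_symm]
    rw [hflip, abs_neg]
    exact key n (-x) (by linarith) (by linarith [hx.1])
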